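/- arXiv:1701.03662 — 2 statements merged into one kernel-verified Lean document; each statement's English description precedes it below -/
import Mathlib

section
/- Let D < 0 with D ≡ r^2 (mod 4N) and λ_r as above. The intersection 𝒩 = L ∩ Q·λ_r equals Z·(2N/t)·λ_r where t = gcd(r, 2N), and its dual lattice inside Q·λ_r is 𝒩' = Z·(t/D)·λ_r. -/
/-- The lattice L of integral trace-zero matrices of level N:
L = { [[b, -a/N],[c, -b]] : a,b,c ∈ ℤ }. -/
def Lset (N : ℕ) : Set (Matrix (Fin 2) (Fin 2) ℚ) :=
  {x | ∃ a b c : ℤ, x = !![(b : ℚ), -(a : ℚ) / (N : ℚ); (c : ℚ), -(b : ℚ)]}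

/-- The special vector λ_r = [[r/2N, 1/N],[(D - r²)/4N, -r/2N]]. -/
noncomputable def lambdaR (N : ℕ) (D r : ℤ) : Matrix (Fin 2) (Fin 2) ℚ :=
  !![(r : ℚ) / (2 * N), 1 / (N : ℚ);
     ((D : ℚ) - (r : ℚ) ^ 2) / (4 * N), -(r : ℚ) / (2 * N)]

lemma lam_smul (N : ℕ) (D r : ℤ) (q : ℚ) :
    q • lambdaR N D r =
    !![q * ((r:ℚ)/(2*N)), q * (1/(N:ℚ));
       q * (((D:ℚ)-(r:ℚ)^2)/(4*N)), q * (-(r:ℚ)/(2*N))] := by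
  ext i j
  fin_cases i <;> fin_cases j <;> simp [lambdaR]

lemma trace_lam (N : ℕ) (hN : (N:ℚ) ≠ 0) (D r : ℤ) :
    Matrix.trace (lambdaR N D r * lambdaR N D r) = (D:ℚ) / (2*(N:ℚ)^2) := by
  rw [lambdaR, Matrix.mul_fin_two, Matrix.trace_fin_two_of]
  field_simp
  ring

lemma mem_Lset_smul_iff (N : ℕ) (hN : 0 < N) (D r : ℤ)
    (hr : (4 * (N : ℤ)) ∣ (D - r ^ 2)) (q : ℚ) :
    q • lambdaR N D r ∈ Lset N ↔
      ∃ m : ℤ, q = (m : ℚ) * (2 * (N : ℚ) / (Int.gcd r (2 * N) : ℚ)) := by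
  obtain ⟨s, hs⟩ := hr
  have hN' : (N:ℚ) ≠ 0 := Nat.cast_ne_zero.mpr hN.ne'
  set t : ℤ := (Int.gcd r (2*(N:ℤ)) : ℤ) with ht_def
  have htpos : 0 < Int.gcd r (2*(N:ℤ)) := Int.gcd_pos_iff.mpr (Or.inr (by positivity))
  have ht0 : t ≠ 0 := by rw [ht_def]; exact_mod_cast htpos.ne'
  have htc : ((Int.gcd r (2*(N:ℤ)) : ℕ) : ℚ) = (t:ℚ) := by rw [ht_def]; push_cast; ring
  have htQ : (t:ℚ) ≠ 0 := Int.cast_ne_zero.mpr ht0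
  obtain ⟨u, hu⟩ : t ∣ r := Int.gcd_dvd_left _ _
  obtain ⟨v, hv⟩ : t ∣ 2*(N:ℤ) := Int.gcd_dvd_right _ _
  have hu' : u = r / t := by rw [hu]; exact (Int.mul_ediv_cancel_left u ht0).symm
  have hv' : v = 2*(N:ℤ) / t := by rw [hv]; exact (Int.mul_ediv_cancel_left v ht0).symm
  have hcop : Int.gcd v u = 1 := by
    rw [hu', hv', Int.gcd_comm]
    exact Int.gcd_div_gcd_div_gcd htpos
  have htN : ((2:ℚ) * N) = (t:ℚ) * (v:ℚ) := by exact_mod_cast hv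
  have hvQ : (v:ℚ) ≠ 0 := by
    intro h0
    rw [h0, mul_zero] at htN
    simp [hN'] at htN
  constructor
  · rintro ⟨a, b, c, hx⟩
    rw [lam_smul] at hx
    have h01 := congrFun (congrFun hx 0) 1
    have h00 := congrFun (congrFun hx 0) 0
    simp only [Matrix.of_apply, Matrix.cons_val', Matrix.cons_val_zero, Matrix.cons_val_one, Matrix.head_cons,
      Matrix.empty_val', Matrix.cons_val_fin_one, Matrix.head_fin_const] at h01 h00
    have hq : q = (-a : ℤ) := by
      push_cast
      field_simp at h01
      linarith
    have hab : (-a) * r = 2*(N:ℤ) * b := by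
      have : ((-a : ℤ):ℚ) * r = 2*(N:ℚ) * b := by
        rw [← hq]
        field_simp at h00 ⊢
        linarith [h00]
      exact_mod_cast this
    have hdvd : v ∣ u * (-a) := by
      have h1 : t * v ∣ t * (u * (-a)) := by
        rw [← hv]
        refine ⟨b, ?_⟩
        rw [← hab, hu]; ring
      exact (mul_dvd_mul_iff_left ht0).mp h1
    have hva : v ∣ (-a) := Int.dvd_of_dvd_mul_right_of_gcd_one hdvd hcop
    obtain ⟨m, hm⟩ := hva
    refine ⟨m, ?_⟩
    rw [htc]
    have : ((-a:ℤ):ℚ) = (m:ℚ) * (2 * N / (t:ℚ)) := by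
      rw [hm, htN]
      push_cast
      field_simp
    rw [hq, this]
  · rintro ⟨m, rfl⟩
    rw [htc]
    have hq : (m:ℚ) * (2 * N / (t:ℚ)) = ((m * v : ℤ) : ℚ) := by
      rw [htN]; push_cast; field_simp
    rw [hq]
    refine ⟨-(m*v), m*u, m*v*s, ?_⟩
    rw [lam_smul]
    have hrQ : (r:ℚ) = (t:ℚ) * (u:ℚ) := by exact_mod_cast hu
    have hsQ : (D:ℚ) - (r:ℚ)^2 = 4*(N:ℚ)*(s:ℚ) := by exact_mod_cast hs
    have hsQ' : (D:ℚ) - ((t:ℚ)*(u:ℚ))^2 = 4*(N:ℚ)*(s:ℚ) := by rw [← hrQ]; exact hsQ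
    ext i j
    fin_cases i <;> fin_cases j <;>
      simp only [Matrix.of_apply, Matrix.cons_val', Matrix.cons_val_zero, Matrix.cons_val_one, Matrix.head_cons,
        Matrix.empty_val', Matrix.cons_val_fin_one, Matrix.head_fin_const] <;>
      push_cast [hrQ, hsQ] <;> (try rw [htN]) <;> field_simp <;> (first | ring1 | linear_combination ((m:ℚ) * (v:ℚ)) * hsQ' | linear_combination (m:ℚ) * hsQ')

/-- with t = gcd(r, 2N), the rank one lattice 𝒩 = L ∩ ℚ·λ_r equals
ℤ·(2N/t)·λ_r, and its dual inside ℚ·λ_r (w.r.t. (x,y) = N·tr(xy)) is 𝒩' = ℤ·(t/D)·λ_r. -/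
theorem stmt11 (N : ℕ) (hN : 0 < N) (D r : ℤ) (hD : D < 0)
    (hr : (4 * (N : ℤ)) ∣ (D - r ^ 2)) :
    (Lset N ∩ {x | ∃ q : ℚ, x = q • lambdaR N D r} =
        {x | ∃ m : ℤ, x = ((m : ℚ) * (2 * (N : ℚ) / (Int.gcd r (2 * N) : ℚ))) •
          lambdaR N D r}) ∧
      ({y | (∃ q : ℚ, y = q • lambdaR N D r) ∧
          ∀ x ∈ Lset N ∩ {x | ∃ q : ℚ, x = q • lambdaR N D r},
            ∃ k : ℤ, (N : ℚ) * Matrix.trace (x * y) = (k : ℚ)} =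
        {y | ∃ m : ℤ, y = ((m : ℚ) * ((Int.gcd r (2 * N) : ℚ) / (D : ℚ))) •
          lambdaR N D r}) := by
  have hN' : (N:ℚ) ≠ 0 := Nat.cast_ne_zero.mpr hN.ne'
  have htpos : 0 < Int.gcd r (2*(N:ℤ)) := Int.gcd_pos_iff.mpr (Or.inr (by positivity))
  have htQ : ((Int.gcd r (2*(N:ℤ)) : ℕ):ℚ) ≠ 0 := by exact_mod_cast htpos.ne'
  have hDQ : (D:ℚ) ≠ 0 := Int.cast_ne_zero.mpr hD.ne
  have htr := trace_lam N hN' D r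
  constructor
  · ext x
    simp only [Set.mem_inter_iff, Set.mem_setOf_eq]
    constructor
    · rintro ⟨hL, q, rfl⟩
      obtain ⟨m, hm⟩ := (mem_Lset_smul_iff N hN D r hr q).mp hL
      exact ⟨m, by rw [hm]⟩
    · rintro ⟨m, rfl⟩
      exact ⟨(mem_Lset_smul_iff N hN D r hr _).mpr ⟨m, rfl⟩, _, rfl⟩
  · ext y
    simp only [Set.mem_setOf_eq, Set.mem_inter_iff]
    constructor
    · rintro ⟨⟨p, rfl⟩, hdual⟩
      obtain ⟨k, hk⟩ := hdual ((2*(N:ℚ)/((Int.gcd r (2*(N:ℤ)) : ℕ):ℚ)) • lambdaR N D r)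
        ⟨(mem_Lset_smul_iff N hN D r hr _).mpr ⟨1, by push_cast; ring⟩, _, rfl⟩
      rw [smul_mul_smul_comm, Matrix.trace_smul, smul_eq_mul, htr] at hk
      refine ⟨k, ?_⟩
      field_simp at hk
      have hp : p = (k:ℚ) * (((Int.gcd r (2*(N:ℤ)) : ℕ):ℚ) / D) := by
        have h2 : p * (D:ℚ) * (2*(N:ℚ)^2) = (k:ℚ) * ((Int.gcd r (2*(N:ℤ)) : ℕ):ℚ) * (2*(N:ℚ)^2) := by
          linear_combination (2*(N:ℚ)^2) * hk
        have h3 := mul_right_cancel₀ (mul_ne_zero two_ne_zero (pow_ne_zero 2 hN')) h2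
        field_simp
        linear_combination h3
      rw [hp]
    · rintro ⟨m, rfl⟩
      refine ⟨⟨_, rfl⟩, ?_⟩
      rintro x ⟨hL, q, rfl⟩
      obtain ⟨m', hm'⟩ := (mem_Lset_smul_iff N hN D r hr q).mp hL
      refine ⟨m' * m, ?_⟩
      rw [smul_mul_smul_comm, Matrix.trace_smul, smul_eq_mul, htr, hm']
      push_cast
      field_simp
end

section
/- Let D be an odd negative fundamental discriminant, 𝔞 = (A, (B+√D)/2) an integral ideal with gcd(A,D) = 1, and R = FD where 2AE + BF = 1. Then the ideal 𝔟 = (A|D|, (R+√D)/2) equals 𝔡_k · 𝔞, where 𝔡_k = (√D) is the different of k = Q(√D). In particular [𝔟] = [𝔞] in the class group, since 𝔡_k is principal. -/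
/-- A fundamental discriminant: either D ≡ 1 (mod 4) and D squarefree, or D = 4m with
m ≡ 2, 3 (mod 4) and m squarefree. -/
def IsFundamentalDiscriminant (D : ℤ) : Prop :=
  (D % 4 = 1 ∧ Squarefree D) ∨
    (D % 4 = 0 ∧ Squarefree (D / 4) ∧ (D / 4 % 4 = 2 ∨ D / 4 % 4 = 3))

lemma mem2 {x y : ℂ} (m n : ℤ) : m • x + n • y ∈ AddSubgroup.closure {x, y} := by
  exact add_mem (zsmul_mem (AddSubgroup.subset_closure (by simp)) m)
    (zsmul_mem (AddSubgroup.subset_closure (by simp)) n)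

/-- let D be an odd negative fundamental discriminant,
𝔞 = (A, (B+√D)/2) (corresponding to the form [A,B,C], D = B² - 4AC, gcd(A,D) = 1),
E, F with 2AE + BF = 1 and R = FD.  Then, realizing the ideals as ℤ-modules inside ℂ
(with s = √D, Im s > 0), one has 𝔟 = (A|D|, (R+√D)/2) = √D · (A, (B+√D)/2) = 𝔡_k·𝔞,
where the different 𝔡_k = (√D) is principal; in particular [𝔟] = [𝔞]. -/
theorem stmt13 (D A B C E F : ℤ) (hD : D < 0) (hDodd : Odd D)
    (hfund : IsFundamentalDiscriminant D) (hform : D = B ^ 2 - 4 * A * C)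
    (hA : 0 < A) (hcop : IsCoprime A D) (hEF : 2 * A * E + B * F = 1)
    (s : ℂ) (hs : s ^ 2 = (D : ℂ)) (him : 0 < s.im) :
    AddSubgroup.closure {((A * |D| : ℤ) : ℂ), (((F * D : ℤ) : ℂ) + s) / 2} =
      AddSubgroup.map (AddMonoidHom.mulLeft s)
        (AddSubgroup.closure {((A : ℤ) : ℂ), (((B : ℤ) : ℂ) + s) / 2}) := by
  have habs : (|D| : ℤ) = -D := abs_of_neg hD
  have hEF' : (2 * A * E + B * F : ℂ) = 1 := by exact_mod_cast congrArg (Int.cast : ℤ → ℂ) hEF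
  apply le_antisymm
  · rw [AddSubgroup.closure_le]
    rintro z (rfl | rfl)
    · refine ⟨(B : ℤ) • ((A : ℤ) : ℂ) + (-(2 * A)) • ((((B : ℤ) : ℂ) + s) / 2),
        mem2 B (-(2 * A)), ?_⟩
      simp only [AddMonoidHom.coe_mulLeft, zsmul_eq_mul]
      push_cast [habs]
      linear_combination (-(A : ℂ)) * hs
    · refine ⟨(E : ℤ) • ((A : ℤ) : ℂ) + (F : ℤ) • ((((B : ℤ) : ℂ) + s) / 2),
        mem2 E F, ?_⟩
      simp only [AddMonoidHom.coe_mulLeft, zsmul_eq_mul]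
      push_cast
      linear_combination ((F : ℂ) / 2) * hs + (s / 2) * hEF'
  · rintro z ⟨w, hw, rfl⟩
    simp only [AddMonoidHom.coe_mulLeft]
    induction hw using AddSubgroup.closure_induction with
    | mem x hx =>
      rcases hx with rfl | rfl
      · have : s * ((A : ℤ) : ℂ) =
            (F : ℤ) • (((A * |D| : ℤ) : ℂ)) + (2 * A : ℤ) • ((((F * D : ℤ) : ℂ) + s) / 2) := by
          simp only [zsmul_eq_mul]
          push_cast [habs]
          ring
        rw [this]; exact mem2 _ _
      · have : s * ((((B : ℤ) : ℂ) + s) / 2) =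
            (-E : ℤ) • (((A * |D| : ℤ) : ℂ)) + (B : ℤ) • ((((F * D : ℤ) : ℂ) + s) / 2) := by
          simp only [zsmul_eq_mul]
          push_cast [habs]
          linear_combination (1 / 2 : ℂ) * hs - ((D : ℂ) / 2) * hEF'
        rw [this]; exact mem2 _ _
    | zero => simpa using (AddSubgroup.closure _).zero_mem
    | add x y _ _ hx hy => rw [mul_add]; exact add_mem hx hy
    | neg x _ hx => rw [mul_neg]; exact neg_mem hx
end
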